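/- arXiv:1711.00389 — 3 statements merged into one kernel-verified Lean document; each statement's English description precedes it below -/
import Mathlib

section
/- Let α, β ∈ ℂ, r > 0, κ > 0, and for z ∈ ℂ write θ(z) = ϑ₁(z/(πr); iκ). Then for all complex numbers ℓ, k, n, m the identity θ(n−ℓ+m−k)·θ(α+m+k+n)·θ(β+n+ℓ+m)·θ(α−β+m−n) = θ(m−k)·θ(α+m+k+ℓ)·θ(β+2n+m)·θ(α−β+m−ℓ) + θ(n−ℓ)·θ(α+n+2m)·θ(β+n+ℓ+k)·θ(α−β+k−n) holds. -/
open scoped Real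

/-- The Jacobi theta function `ϑ₁(v; τ)`, defined by its series
`ϑ₁(v; τ) = 2 ∑_{n=1}^∞ (−1)^{n−1} exp(πiτ(n−1/2)²) sin((2n−1)πv)`
(reindexed over `n : ℕ` starting from `0`). -/
noncomputable def theta1 (v τ : ℂ) : ℂ :=
  2 * ∑' n : ℕ, (-1 : ℂ) ^ n * Complex.exp (π * Complex.I * τ * ((n : ℂ) + 1 / 2) ^ 2) *
    Complex.sin ((2 * (n : ℂ) + 1) * π * v)

/-- `θ(z) = ϑ₁(z/(πr); iκ)`. -/
noncomputable def thetaR (r κ : ℝ) (z : ℂ) : ℂ :=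
  theta1 (z / (π * r)) (Complex.I * κ)

/-! ### Auxiliary machinery for the proof -/

/-- The basic term: `Wt r κ z n = (-1)^n exp(πiτ(n+1/2)²) exp(i(2n+1)z/r)` with `τ = iκ`,
written as a single exponential. -/
noncomputable def Wt (r κ : ℝ) (z : ℂ) (n : ℤ) : ℂ :=
  Complex.exp (π * Complex.I * n + π * Complex.I * (Complex.I * κ) * ((n : ℂ) + 1 / 2) ^ 2 +
    Complex.I * (2 * (n : ℂ) + 1) * z / r)

/-- Term of the quadruple product series. -/
noncomputable def Qt (r κ : ℝ) (z₁ z₂ z₃ z₄ : ℂ) (y : (ℤ × ℤ) × ℤ × ℤ) : ℂ :=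
  Wt r κ z₁ y.1.1 * Wt r κ z₂ y.1.2 * (Wt r κ z₃ y.2.1 * Wt r κ z₄ y.2.2)

/-- Terms of the quadruple series with even index sum, parametrised by `ℤ⁴`. -/
noncomputable def QE (r κ : ℝ) (z₁ z₂ z₃ z₄ : ℂ) (x : ℤ × ℤ × ℤ × ℤ) : ℂ :=
  Qt r κ z₁ z₂ z₃ z₄ ((x.1, x.2.1), (x.2.2.1, x.1 + x.2.1 + x.2.2.1 + 2 * x.2.2.2))

/-- Terms of the quadruple series with odd index sum, parametrised by `ℤ⁴`. -/
noncomputable def QO (r κ : ℝ) (z₁ z₂ z₃ z₄ : ℂ) (x : ℤ × ℤ × ℤ × ℤ) : ℂ :=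
  Qt r κ z₁ z₂ z₃ z₄ ((x.1, x.2.1), (x.2.2.1, x.1 + x.2.1 + x.2.2.1 + 2 * x.2.2.2 + 1))

/-- Terms of the auxiliary integer-lattice theta series (odd coordinate sum),
parametrised by `ℤ⁴`. -/
noncomputable def Ut (r κ : ℝ) (z₁ z₂ z₃ z₄ : ℂ) (x : ℤ × ℤ × ℤ × ℤ) : ℂ :=
  Complex.exp (π * Complex.I + π * Complex.I * (Complex.I * κ) *
      ((x.1 : ℂ) ^ 2 + (x.2.1 : ℂ) ^ 2 + (x.2.2.1 : ℂ) ^ 2 +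
        ((x.1 : ℂ) + x.2.1 + x.2.2.1 + 2 * x.2.2.2 + 1) ^ 2) +
    2 * Complex.I * ((x.1 : ℂ) * z₁ + (x.2.1 : ℂ) * z₂ + (x.2.2.1 : ℂ) * z₃ +
      ((x.1 : ℂ) + x.2.1 + x.2.2.1 + 2 * x.2.2.2 + 1) * z₄) / r)

/-- Splitting `ℤ⁴` into even and odd index-sum parts. -/
def pSplit : ((ℤ × ℤ × ℤ × ℤ) × Bool) ≃ ((ℤ × ℤ) × ℤ × ℤ) where
  toFun x := ((x.1.1, x.1.2.1),
    (x.1.2.2.1, x.1.1 + x.1.2.1 + x.1.2.2.1 + 2 * x.1.2.2.2 + (cond x.2 1 0)))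
  invFun y :=
    if (y.2.2 - y.1.1 - y.1.2 - y.2.1) % 2 = 0 then
      ((y.1.1, y.1.2, y.2.1, (y.2.2 - y.1.1 - y.1.2 - y.2.1) / 2), false)
    else ((y.1.1, y.1.2, y.2.1, (y.2.2 - y.1.1 - y.1.2 - y.2.1 - 1) / 2), true)
  left_inv := by
    rintro ⟨⟨a, b, c, d⟩, s⟩
    cases s <;> simp only [cond] <;> split_ifs with h <;> simp_all [Prod.mk.injEq] <;> omega
  right_inv := by
    rintro ⟨⟨a, b⟩, c, e⟩
    dsimp only
    split_ifs with h <;> simp_all [Prod.mk.injEq] <;> omega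

def ψ1 : (ℤ × ℤ × ℤ × ℤ) ≃ (ℤ × ℤ × ℤ × ℤ) where
  toFun x := (x.2.1 + x.2.2.1 + x.2.2.2, x.1 + x.2.2.1 + x.2.2.2, x.1 + x.2.1 + x.2.2.2,
    -x.1 - x.2.1 - x.2.2.1 - 2 * x.2.2.2)
  invFun x := (x.2.1 + x.2.2.1 + x.2.2.2, x.1 + x.2.2.1 + x.2.2.2, x.1 + x.2.1 + x.2.2.2,
    -x.1 - x.2.1 - x.2.2.1 - 2 * x.2.2.2)
  left_inv := by
    rintro ⟨a, b, c, d⟩; simp only [Prod.mk.injEq]; refine ⟨?_, ?_, ?_, ?_⟩ <;> first | omega | trivial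
  right_inv := by
    rintro ⟨a, b, c, d⟩; simp only [Prod.mk.injEq]; refine ⟨?_, ?_, ?_, ?_⟩ <;> first | omega | trivial

def ψ2 : (ℤ × ℤ × ℤ × ℤ) ≃ (ℤ × ℤ × ℤ × ℤ) where
  toFun x := (x.2.1 + x.2.2.1 + x.2.2.2 + 1, x.1 + x.2.2.1 + x.2.2.2 + 1,
    x.1 + x.2.1 + x.2.2.2 + 1, -x.1 - x.2.1 - x.2.2.1 - 2 * x.2.2.2 - 2)
  invFun x := (x.2.1 + x.2.2.1 + x.2.2.2, x.1 + x.2.2.1 + x.2.2.2, x.1 + x.2.1 + x.2.2.2,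
    -x.1 - x.2.1 - x.2.2.1 - 2 * x.2.2.2 - 1)
  left_inv := by
    rintro ⟨a, b, c, d⟩; simp only [Prod.mk.injEq]; refine ⟨?_, ?_, ?_, ?_⟩ <;> first | omega | trivial
  right_inv := by
    rintro ⟨a, b, c, d⟩; simp only [Prod.mk.injEq]; refine ⟨?_, ?_, ?_, ?_⟩ <;> first | omega | trivial

def ψ3 : (ℤ × ℤ × ℤ × ℤ) ≃ (ℤ × ℤ × ℤ × ℤ) where
  toFun x := (-x.2.2.1 - x.2.2.2, x.1 + x.2.1 + x.2.2.1 + x.2.2.2 + 1,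
    -x.1 - x.2.2.2, x.2.2.2 - 1)
  invFun x := (-x.2.2.1 - x.2.2.2 - 1, x.1 + x.2.1 + x.2.2.1 + x.2.2.2,
    -x.1 - x.2.2.2 - 1, x.2.2.2 + 1)
  left_inv := by
    rintro ⟨a, b, c, d⟩; simp only [Prod.mk.injEq]; refine ⟨?_, ?_, ?_, ?_⟩ <;> first | omega | trivial
  right_inv := by
    rintro ⟨a, b, c, d⟩; simp only [Prod.mk.injEq]; refine ⟨?_, ?_, ?_, ?_⟩ <;> first | omega | trivial

def ψ4 : (ℤ × ℤ × ℤ × ℤ) ≃ (ℤ × ℤ × ℤ × ℤ) where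
  toFun x := (-x.2.2.1 - x.2.2.2 - 1, x.1 + x.2.1 + x.2.2.1 + x.2.2.2 + 1,
    -x.1 - x.2.2.2 - 1, x.2.2.2)
  invFun x := (-x.2.2.1 - x.2.2.2 - 1, x.1 + x.2.1 + x.2.2.1 + x.2.2.2 + 1,
    -x.1 - x.2.2.2 - 1, x.2.2.2)
  left_inv := by
    rintro ⟨a, b, c, d⟩; simp only [Prod.mk.injEq]; refine ⟨?_, ?_, ?_, ?_⟩ <;> first | omega | trivial
  right_inv := by
    rintro ⟨a, b, c, d⟩; simp only [Prod.mk.injEq]; refine ⟨?_, ?_, ?_, ?_⟩ <;> first | omega | trivial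

private lemma summable_exp_quad_nat (A B : ℝ) (hA : 0 < A) :
    Summable fun n : ℕ => Real.exp (-A * (n : ℝ) ^ 2 + B * n) := by
  have key : ∀ x : ℝ, -A * x ^ 2 + B * x ≤ (B + 1) ^ 2 / (4 * A) + x * (-1) := by
    intro x
    have h4 : (0:ℝ) < 4 * A := by linarith
    rw [← sub_nonneg]
    have h : (B + 1) ^ 2 / (4 * A) * (4 * A) = (B + 1) ^ 2 := div_mul_cancel₀ _ h4.ne'
    nlinarith [sq_nonneg (2 * A * x - (B + 1)), sq_nonneg (B + 1)]
  refine Summable.of_nonneg_of_le (fun n => (Real.exp_pos _).le) (fun n => ?_)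
    (((summable_geometric_of_lt_one (Real.exp_pos (-1)).le
      (Real.exp_lt_one_iff.mpr (by norm_num))).mul_left (Real.exp ((B + 1) ^ 2 / (4 * A)))))
  rw [← Real.exp_nat_mul, ← Real.exp_add]
  exact Real.exp_le_exp.mpr (by simpa [mul_comm] using key n)

private lemma summable_exp_quad (A B C : ℝ) (hA : 0 < A) :
    Summable fun n : ℤ => Real.exp (-A * (n : ℝ) ^ 2 + B * n + C) := by
  have h : ∀ B' : ℝ, Summable fun n : ℕ => Real.exp (-A * (n : ℝ) ^ 2 + B' * n + C) := by
    intro B'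
    simpa [Real.exp_add, mul_comm] using (summable_exp_quad_nat A B' hA).mul_right (Real.exp C)
  apply Summable.of_nat_of_neg
  · simpa using h B
  · refine ((h (-B)).congr fun n => ?_)
    push_cast
    ring_nf

private lemma norm_Wt (r κ : ℝ) (hr : 0 < r) (z : ℂ) (n : ℤ) :
    ‖Wt r κ z n‖ = Real.exp (-(π * κ) * (n : ℝ) ^ 2 +
      (-(π * κ) - 2 * z.im / r) * n + (-(π * κ) / 4 - z.im / r)) := by
  rw [Wt, Complex.norm_exp]
  congr 1
  simp only [div_eq_mul_inv, ← Complex.ofReal_inv, pow_two]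
  simp only [Complex.add_re, Complex.add_im, Complex.mul_re, Complex.mul_im, Complex.I_re,
    Complex.I_im, Complex.ofReal_re, Complex.ofReal_im, Complex.intCast_re, Complex.intCast_im,
    Complex.one_re, Complex.one_im, Complex.inv_re, Complex.inv_im, Complex.re_ofNat,
    Complex.im_ofNat, Complex.normSq_ofNat]
  field_simp
  ring

private lemma summable_norm_Wt (r κ : ℝ) (hr : 0 < r) (hκ : 0 < κ) (z : ℂ) :
    Summable fun n : ℤ => ‖Wt r κ z n‖ := by
  refine (summable_exp_quad (π * κ) (-(π * κ) - 2 * z.im / r) (-(π * κ) / 4 - z.im / r)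
    (by positivity)).congr fun n => ?_
  rw [norm_Wt r κ hr z n]

private lemma summable_Wt (r κ : ℝ) (hr : 0 < r) (hκ : 0 < κ) (z : ℂ) :
    Summable fun n : ℤ => Wt r κ z n :=
  (summable_norm_Wt r κ hr hκ z).of_norm

private lemma pointwise_pair (r κ : ℝ) (hr : 0 < r) (z : ℂ) (n : ℕ) :
    (-Complex.I) * (Wt r κ z n + Wt r κ z (Int.negSucc n)) =
      2 * ((-1 : ℂ) ^ n * Complex.exp (π * Complex.I * (Complex.I * κ) * ((n : ℂ) + 1 / 2) ^ 2) *
        Complex.sin ((2 * (n : ℂ) + 1) * π * (z / (π * r)))) := by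
  have hπ : (π : ℂ) ≠ 0 := Complex.ofReal_ne_zero.mpr Real.pi_ne_zero
  have hrc : (r : ℂ) ≠ 0 := Complex.ofReal_ne_zero.mpr hr.ne'
  have harg : (2 * (n : ℂ) + 1) * π * (z / (π * r)) = (2 * (n : ℂ) + 1) * z / r := by
    field_simp
  have h1 : Wt r κ z n = (-1 : ℂ) ^ n *
      Complex.exp (π * Complex.I * (Complex.I * κ) * ((n : ℂ) + 1 / 2) ^ 2) *
      Complex.exp (Complex.I * (2 * (n : ℂ) + 1) * z / r) := by
    rw [Wt, show (π : ℂ) * Complex.I * ((n : ℤ) : ℂ) +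
        π * Complex.I * (Complex.I * κ) * (((n : ℤ) : ℂ) + 1 / 2) ^ 2 +
        Complex.I * (2 * ((n : ℤ) : ℂ) + 1) * z / r =
        (n : ℕ) * (π * Complex.I) + (π * Complex.I * (Complex.I * κ) * ((n : ℂ) + 1 / 2) ^ 2 +
          Complex.I * (2 * (n : ℂ) + 1) * z / r) by push_cast; ring,
      Complex.exp_add, Complex.exp_add, Complex.exp_nat_mul, Complex.exp_pi_mul_I]
    ring
  have h2 : Wt r κ z (Int.negSucc n) = -((-1 : ℂ) ^ n) *
      Complex.exp (π * Complex.I * (Complex.I * κ) * ((n : ℂ) + 1 / 2) ^ 2) *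
      (Complex.exp (Complex.I * (2 * (n : ℂ) + 1) * z / r))⁻¹ := by
    rw [Wt, show (π : ℂ) * Complex.I * ((Int.negSucc n : ℤ) : ℂ) +
        π * Complex.I * (Complex.I * κ) * (((Int.negSucc n : ℤ) : ℂ) + 1 / 2) ^ 2 +
        Complex.I * (2 * ((Int.negSucc n : ℤ) : ℂ) + 1) * z / r =
        ((n + 1 : ℕ)) * (-(π * Complex.I)) +
          (π * Complex.I * (Complex.I * κ) * ((n : ℂ) + 1 / 2) ^ 2 +
          (-(Complex.I * (2 * (n : ℂ) + 1) * z / r))) by push_cast [Int.cast_negSucc]; ring,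
      Complex.exp_add, Complex.exp_add, Complex.exp_nat_mul, Complex.exp_neg, Complex.exp_neg,
      Complex.exp_pi_mul_I]
    rw [show ((-1 : ℂ))⁻¹ ^ (n + 1) = ((-1 : ℂ)) ^ (n + 1) by norm_num, pow_succ]
    ring
  rw [h1, h2, harg, Complex.sin]
  rw [show Complex.exp (-((2 * (n : ℂ) + 1) * z / r) * Complex.I) =
      (Complex.exp (Complex.I * (2 * (n : ℂ) + 1) * z / r))⁻¹ by
    rw [← Complex.exp_neg]; congr 1; ring]
  rw [show Complex.exp ((2 * (n : ℂ) + 1) * z / r * Complex.I) =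
      Complex.exp (Complex.I * (2 * (n : ℂ) + 1) * z / r) by congr 1; ring]
  ring

private lemma thetaR_eq (r κ : ℝ) (hr : 0 < r) (hκ : 0 < κ) (z : ℂ) :
    thetaR r κ z = -Complex.I * ∑' n : ℤ, Wt r κ z n := by
  have hs := summable_Wt r κ hr hκ z
  have hpos : Summable fun n : ℕ => Wt r κ z (n : ℤ) :=
    hs.comp_injective fun a b h => by exact_mod_cast h
  have hneg : Summable fun n : ℕ => Wt r κ z (Int.negSucc n) :=
    hs.comp_injective fun a b h => by
      have := @Int.negSucc.inj a b h; omega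
  have hrec : ∑' n : ℤ, Wt r κ z n =
      (∑' n : ℕ, Wt r κ z (n : ℤ)) + ∑' n : ℕ, Wt r κ z (Int.negSucc n) := by
    rw [← tsum_int_rec hpos hneg]
    refine tsum_congr fun m => ?_
    cases m <;> rfl
  rw [hrec, ← Summable.tsum_add hpos hneg, thetaR, theta1, ← tsum_mul_left, ← tsum_mul_left]
  exact tsum_congr fun n => (pointwise_pair r κ hr z n).symm

set_option maxHeartbeats 1000000 in
private lemma S1 (r κ : ℝ) (hr : 0 < r) (z₁ z₂ z₃ z₄ : ℂ) (x : ℤ × ℤ × ℤ × ℤ) :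
    QE r κ ((-z₁ + z₂ + z₃ + z₄) / 2) ((z₁ - z₂ + z₃ + z₄) / 2) ((z₁ + z₂ - z₃ + z₄) / 2)
      ((z₁ + z₂ + z₃ - z₄) / 2) x = QE r κ z₁ z₂ z₃ z₄ (ψ1 x) := by
  obtain ⟨a, b, c, d⟩ := x
  have hrc : (r : ℂ) ≠ 0 := Complex.ofReal_ne_zero.mpr hr.ne'
  simp only [QE, Qt, ψ1, Equiv.coe_fn_mk, Wt, ← Complex.exp_add]
  congr 1
  push_cast
  field_simp
  ring

set_option maxHeartbeats 1000000 in
private lemma S2 (r κ : ℝ) (hr : 0 < r) (z₁ z₂ z₃ z₄ : ℂ) (x : ℤ × ℤ × ℤ × ℤ) :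
    QO r κ ((-z₁ + z₂ + z₃ + z₄) / 2) ((z₁ - z₂ + z₃ + z₄) / 2) ((z₁ + z₂ - z₃ + z₄) / 2)
      ((z₁ + z₂ + z₃ - z₄) / 2) x = Ut r κ z₁ z₂ z₃ z₄ (ψ2 x) := by
  obtain ⟨a, b, c, d⟩ := x
  have hrc : (r : ℂ) ≠ 0 := Complex.ofReal_ne_zero.mpr hr.ne'
  simp only [QO, Qt, Ut, ψ2, Equiv.coe_fn_mk, Wt, ← Complex.exp_add]
  rw [Complex.exp_eq_exp_iff_exists_int]
  refine ⟨a + b + c + d, ?_⟩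
  push_cast
  field_simp
  ring

set_option maxHeartbeats 1000000 in
private lemma S3 (r κ : ℝ) (hr : 0 < r) (z₁ z₂ z₃ z₄ : ℂ) (x : ℤ × ℤ × ℤ × ℤ) :
    QE r κ ((z₁ + z₂ - z₃ - z₄) / 2) ((z₁ + z₂ + z₃ + z₄) / 2) ((-z₁ + z₂ + z₃ - z₄) / 2)
      ((-z₁ + z₂ - z₃ + z₄) / 2) x = -Ut r κ z₁ z₂ z₃ z₄ (ψ3 x) := by
  obtain ⟨a, b, c, d⟩ := x
  have hrc : (r : ℂ) ≠ 0 := Complex.ofReal_ne_zero.mpr hr.ne'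
  simp only [QE, Qt, Ut, ψ3, Equiv.coe_fn_mk, Wt, ← Complex.exp_add]
  rw [show ∀ w : ℂ, -Complex.exp w = Complex.exp (w + π * Complex.I) from fun w => by
    rw [Complex.exp_add, Complex.exp_pi_mul_I]; ring]
  rw [Complex.exp_eq_exp_iff_exists_int]
  refine ⟨a + b + c + d - 1, ?_⟩
  push_cast
  field_simp
  ring

set_option maxHeartbeats 1000000 in
private lemma S4 (r κ : ℝ) (hr : 0 < r) (z₁ z₂ z₃ z₄ : ℂ) (x : ℤ × ℤ × ℤ × ℤ) :
    QO r κ ((z₁ + z₂ - z₃ - z₄) / 2) ((z₁ + z₂ + z₃ + z₄) / 2) ((-z₁ + z₂ + z₃ - z₄) / 2)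
      ((-z₁ + z₂ - z₃ + z₄) / 2) x = QO r κ z₁ z₂ z₃ z₄ (ψ4 x) := by
  obtain ⟨a, b, c, d⟩ := x
  have hrc : (r : ℂ) ≠ 0 := Complex.ofReal_ne_zero.mpr hr.ne'
  simp only [QO, Qt, ψ4, Equiv.coe_fn_mk, Wt, ← Complex.exp_add]
  rw [Complex.exp_eq_exp_iff_exists_int]
  refine ⟨a + c + d + 1, ?_⟩
  push_cast
  field_simp
  ring

set_option maxHeartbeats 1000000 in
private lemma key (r κ : ℝ) (hr : 0 < r) (hκ : 0 < κ) (z₁ z₂ z₃ z₄ : ℂ) :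
    (∑' n : ℤ, Wt r κ z₁ n) * (∑' n : ℤ, Wt r κ z₂ n) *
      ((∑' n : ℤ, Wt r κ z₃ n) * (∑' n : ℤ, Wt r κ z₄ n))
    = (∑' n : ℤ, Wt r κ ((-z₁ + z₂ + z₃ + z₄) / 2) n) *
        (∑' n : ℤ, Wt r κ ((z₁ - z₂ + z₃ + z₄) / 2) n) *
        ((∑' n : ℤ, Wt r κ ((z₁ + z₂ - z₃ + z₄) / 2) n) *
          (∑' n : ℤ, Wt r κ ((z₁ + z₂ + z₃ - z₄) / 2) n))
      + (∑' n : ℤ, Wt r κ ((z₁ + z₂ - z₃ - z₄) / 2) n) *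
          (∑' n : ℤ, Wt r κ ((z₁ + z₂ + z₃ + z₄) / 2) n) *
          ((∑' n : ℤ, Wt r κ ((-z₁ + z₂ + z₃ - z₄) / 2) n) *
            (∑' n : ℤ, Wt r κ ((-z₁ + z₂ - z₃ + z₄) / 2) n)) := by
  have s : ∀ w : ℂ, Summable fun n : ℤ => ‖Wt r κ w n‖ := summable_norm_Wt r κ hr hκ
  have hprod : ∀ w₁ w₂ w₃ w₄ : ℂ,
      (∑' n : ℤ, Wt r κ w₁ n) * (∑' n : ℤ, Wt r κ w₂ n) *
        ((∑' n : ℤ, Wt r κ w₃ n) * (∑' n : ℤ, Wt r κ w₄ n)) =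
      ∑' y : (ℤ × ℤ) × ℤ × ℤ, Qt r κ w₁ w₂ w₃ w₄ y := by
    intro w₁ w₂ w₃ w₄
    rw [tsum_mul_tsum_of_summable_norm (s w₁) (s w₂),
      tsum_mul_tsum_of_summable_norm (s w₃) (s w₄),
      tsum_mul_tsum_of_summable_norm ((s w₁).mul_norm (s w₂)) ((s w₃).mul_norm (s w₄))]
    rfl
  have hsummQ : ∀ w₁ w₂ w₃ w₄ : ℂ, Summable (Qt r κ w₁ w₂ w₃ w₄) := fun w₁ w₂ w₃ w₄ =>
    (((s w₁).mul_norm (s w₂)).mul_norm ((s w₃).mul_norm (s w₄))).of_norm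
  have hsplit : ∀ w₁ w₂ w₃ w₄ : ℂ,
      (∑' y : (ℤ × ℤ) × ℤ × ℤ, Qt r κ w₁ w₂ w₃ w₄ y) =
        (∑' x : ℤ × ℤ × ℤ × ℤ, QE r κ w₁ w₂ w₃ w₄ x) +
          ∑' x : ℤ × ℤ × ℤ × ℤ, QO r κ w₁ w₂ w₃ w₄ x := by
    intro w₁ w₂ w₃ w₄
    have hsum := hsummQ w₁ w₂ w₃ w₄
    have hsum' : Summable fun p : (ℤ × ℤ × ℤ × ℤ) × Bool => Qt r κ w₁ w₂ w₃ w₄ (pSplit p) :=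
      pSplit.summable_iff.mpr hsum
    have h0 : ∀ x : ℤ × ℤ × ℤ × ℤ,
        Qt r κ w₁ w₂ w₃ w₄ (pSplit (x, false)) = QE r κ w₁ w₂ w₃ w₄ x := by
      intro x; simp [pSplit, QE]
    have h1 : ∀ x : ℤ × ℤ × ℤ × ℤ,
        Qt r κ w₁ w₂ w₃ w₄ (pSplit (x, true)) = QO r κ w₁ w₂ w₃ w₄ x := by
      intro x; simp [pSplit, QO]
    have hQE : Summable (QE r κ w₁ w₂ w₃ w₄) := by
      refine Summable.congr ?_ h0
      exact hsum'.comp_injective fun a b h => (Prod.ext_iff.mp h).1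
    have hQO : Summable (QO r κ w₁ w₂ w₃ w₄) := by
      refine Summable.congr ?_ h1
      exact hsum'.comp_injective fun a b h => (Prod.ext_iff.mp h).1
    calc ∑' y : (ℤ × ℤ) × ℤ × ℤ, Qt r κ w₁ w₂ w₃ w₄ y
        = ∑' p : (ℤ × ℤ × ℤ × ℤ) × Bool, Qt r κ w₁ w₂ w₃ w₄ (pSplit p) :=
          (pSplit.tsum_eq _).symm
      _ = ∑' x : ℤ × ℤ × ℤ × ℤ, ∑' b : Bool, Qt r κ w₁ w₂ w₃ w₄ (pSplit (x, b)) :=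
          Summable.tsum_prod' hsum' fun _ => .of_finite
      _ = ∑' x : ℤ × ℤ × ℤ × ℤ, (QE r κ w₁ w₂ w₃ w₄ x + QO r κ w₁ w₂ w₃ w₄ x) :=
          tsum_congr fun x => by rw [tsum_bool, h0, h1]
      _ = _ := Summable.tsum_add hQE hQO
  have L1 : (∑' x : ℤ × ℤ × ℤ × ℤ, QE r κ ((-z₁ + z₂ + z₃ + z₄) / 2) ((z₁ - z₂ + z₃ + z₄) / 2)
      ((z₁ + z₂ - z₃ + z₄) / 2) ((z₁ + z₂ + z₃ - z₄) / 2) x) =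
      ∑' x : ℤ × ℤ × ℤ × ℤ, QE r κ z₁ z₂ z₃ z₄ x := by
    rw [tsum_congr (S1 r κ hr z₁ z₂ z₃ z₄)]
    exact ψ1.tsum_eq _
  have L2 : (∑' x : ℤ × ℤ × ℤ × ℤ, QO r κ ((-z₁ + z₂ + z₃ + z₄) / 2) ((z₁ - z₂ + z₃ + z₄) / 2)
      ((z₁ + z₂ - z₃ + z₄) / 2) ((z₁ + z₂ + z₃ - z₄) / 2) x) =
      ∑' x : ℤ × ℤ × ℤ × ℤ, Ut r κ z₁ z₂ z₃ z₄ x := by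
    rw [tsum_congr (S2 r κ hr z₁ z₂ z₃ z₄)]
    exact ψ2.tsum_eq _
  have L3 : (∑' x : ℤ × ℤ × ℤ × ℤ, QE r κ ((z₁ + z₂ - z₃ - z₄) / 2) ((z₁ + z₂ + z₃ + z₄) / 2)
      ((-z₁ + z₂ + z₃ - z₄) / 2) ((-z₁ + z₂ - z₃ + z₄) / 2) x) =
      -∑' x : ℤ × ℤ × ℤ × ℤ, Ut r κ z₁ z₂ z₃ z₄ x := by
    rw [tsum_congr (S3 r κ hr z₁ z₂ z₃ z₄), tsum_neg]
    rw [ψ3.tsum_eq]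
  have L4 : (∑' x : ℤ × ℤ × ℤ × ℤ, QO r κ ((z₁ + z₂ - z₃ - z₄) / 2) ((z₁ + z₂ + z₃ + z₄) / 2)
      ((-z₁ + z₂ + z₃ - z₄) / 2) ((-z₁ + z₂ - z₃ + z₄) / 2) x) =
      ∑' x : ℤ × ℤ × ℤ × ℤ, QO r κ z₁ z₂ z₃ z₄ x := by
    rw [tsum_congr (S4 r κ hr z₁ z₂ z₃ z₄)]
    exact ψ4.tsum_eq _
  rw [hprod, hprod, hprod, hsplit, hsplit, hsplit, L1, L2, L3, L4]
  ring

set_option maxHeartbeats 1000000 in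
/-- The four-term addition formula for theta functions (special case used in the
proof of Theorem 2.1). -/
theorem theta_addition_formula (r κ : ℝ) (hr : 0 < r) (hκ : 0 < κ) (α β ℓ k n m : ℂ) :
    thetaR r κ (n - ℓ + m - k) * thetaR r κ (α + m + k + n) * thetaR r κ (β + n + ℓ + m) *
        thetaR r κ (α - β + m - n)
      = thetaR r κ (m - k) * thetaR r κ (α + m + k + ℓ) * thetaR r κ (β + 2 * n + m) *
          thetaR r κ (α - β + m - ℓ)
        + thetaR r κ (n - ℓ) * thetaR r κ (α + n + 2 * m) * thetaR r κ (β + n + ℓ + k) *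
            thetaR r κ (α - β + k - n) := by
  have hkey := key r κ hr hκ (n - ℓ + m - k) (α + m + k + n) (β + n + ℓ + m) (α - β + m - n)
  rw [show (-(n - ℓ + m - k) + (α + m + k + n) + (β + n + ℓ + m) + (α - β + m - n)) / 2 =
      α + m + k + ℓ by ring] at hkey
  rw [show ((n - ℓ + m - k) - (α + m + k + n) + (β + n + ℓ + m) + (α - β + m - n)) / 2 =
      m - k by ring] at hkey
  rw [show ((n - ℓ + m - k) + (α + m + k + n) - (β + n + ℓ + m) + (α - β + m - n)) / 2 =
      α - β + m - ℓ by ring] at hkey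
  rw [show ((n - ℓ + m - k) + (α + m + k + n) + (β + n + ℓ + m) - (α - β + m - n)) / 2 =
      β + 2 * n + m by ring] at hkey
  rw [show ((n - ℓ + m - k) + (α + m + k + n) - (β + n + ℓ + m) - (α - β + m - n)) / 2 =
      n - ℓ by ring] at hkey
  rw [show ((n - ℓ + m - k) + (α + m + k + n) + (β + n + ℓ + m) + (α - β + m - n)) / 2 =
      α + n + 2 * m by ring] at hkey
  rw [show (-(n - ℓ + m - k) + (α + m + k + n) + (β + n + ℓ + m) - (α - β + m - n)) / 2 =
      β + n + ℓ + k by ring] at hkey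
  rw [show (-(n - ℓ + m - k) + (α + m + k + n) - (β + n + ℓ + m) + (α - β + m - n)) / 2 =
      α - β + k - n by ring] at hkey
  simp only [thetaR_eq r κ hr hκ]
  linear_combination ((-Complex.I) ^ 4) * hkey
end

section
/- Let T ∈ ℕ with T ≥ 1, r > 0, α₀ ∈ ℝ, and set λ = (3T−1)/(2πr). Assume (B1) 0 ≤ λ < 1/2 and (B2) πλ < α₀/r < π(1−λ). Then for every (t,x) ∈ Λ*_{2T}: sin(η₁) ≠ 0 and the simplified trigonometric elementary weight q̃(t,x) = sin(ζ₁)/sin(η₁) is a strictly positive real number, where ζ₁ = (2α₀ − (3T+1) + (3t−x))/(2r) and η₁ = (2α₀ − (3T+1) + (t+x))/(2r); consequently the simplified trigonometric excursion measure P̃^{0,0}_{2T} is a probability measure. -/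
open scoped Real

/-- The region `Λ*_{2T}` of spatio-temporal points that can carry a rightward step. -/
def LambdaStar (T : ℕ) : Set (ℤ × ℤ) :=
  {p | Even (p.1 + p.2) ∧
    ((1 ≤ p.1 ∧ p.1 ≤ (T : ℤ) ∧ -p.1 + 2 ≤ p.2 ∧ p.2 ≤ p.1) ∨
     ((T : ℤ) + 1 ≤ p.1 ∧ p.1 ≤ 2 * (T : ℤ) ∧ p.1 - 2 * (T : ℤ) ≤ p.2 ∧
       p.2 ≤ -p.1 + 2 * (T : ℤ)))}

/-- Corollary 5.3: positivity conditions for the simplified trigonometric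
elementary weight `q̃(t,x) = sin ζ₁ / sin η₁`, hence for the simplified
trigonometric excursion measure. -/
theorem simplified_trigonometric_weight_positive (T : ℕ) (hT : 1 ≤ T) (r α₀ : ℝ)
    (hr : 0 < r) (lam : ℝ) (hlam : lam = (3 * (T : ℝ) - 1) / (2 * π * r))
    (hB1 : 0 ≤ lam ∧ lam < 1 / 2)
    (hB2 : π * lam < α₀ / r ∧ α₀ / r < π * (1 - lam)) :
    ∀ t x : ℤ, (t, x) ∈ LambdaStar T →
      Real.sin ((2 * α₀ - (3 * (T : ℝ) + 1) + ((t : ℝ) + (x : ℝ))) / (2 * r)) ≠ 0 ∧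
      0 < Real.sin ((2 * α₀ - (3 * (T : ℝ) + 1) + (3 * (t : ℝ) - (x : ℝ))) / (2 * r)) /
          Real.sin ((2 * α₀ - (3 * (T : ℝ) + 1) + ((t : ℝ) + (x : ℝ))) / (2 * r)) := by
  have hπ : (0:ℝ) < π := Real.pi_pos
  have hr' : r ≠ 0 := ne_of_gt hr
  have hπ' : π ≠ 0 := ne_of_gt hπ
  have hA : 3 * (T:ℝ) - 1 < 2 * α₀ := by
    have h := hB2.1
    rw [hlam] at h
    rw [show π * ((3 * (T:ℝ) - 1) / (2 * π * r)) = (3 * (T:ℝ) - 1) / (2 * r) by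
      field_simp] at h
    rw [div_lt_div_iff₀ (by positivity) hr] at h
    nlinarith
  have hB : 2 * α₀ < 2 * π * r - (3 * (T:ℝ) - 1) := by
    have h := hB2.2
    rw [hlam] at h
    rw [div_lt_iff₀ hr] at h
    have : π * (1 - (3 * (T:ℝ) - 1) / (2 * π * r)) * r
        = π * r - (3 * (T:ℝ) - 1) / 2 := by
      field_simp
    rw [this] at h
    linarith
  have key : ∀ s : ℝ, 2 ≤ s → s ≤ 6 * (T:ℝ) →
      0 < Real.sin ((2 * α₀ - (3 * (T:ℝ) + 1) + s) / (2 * r)) := by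
    intro s h1 h2
    apply Real.sin_pos_of_pos_of_lt_pi
    · apply div_pos (by linarith) (by linarith)
    · rw [div_lt_iff₀ (by linarith)]
      nlinarith
  intro t x hmem
  obtain ⟨_, hcase⟩ := hmem
  have hT' : (1:ℝ) ≤ (T:ℝ) := by exact_mod_cast hT
  have hη : 0 < Real.sin ((2 * α₀ - (3 * (T:ℝ) + 1) + ((t:ℝ) + (x:ℝ))) / (2 * r)) := by
    apply key
    · rcases hcase with ⟨h1, h2, h3, h4⟩ | ⟨h1, h2, h3, h4⟩
      · have h1' : (1:ℝ) ≤ (t:ℝ) := by exact_mod_cast h1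
        have h3' : (-(t:ℝ) + 2) ≤ (x:ℝ) := by exact_mod_cast h3
        linarith
      · have h1' : (T:ℝ) + 1 ≤ (t:ℝ) := by exact_mod_cast h1
        have h3' : (t:ℝ) - 2 * (T:ℝ) ≤ (x:ℝ) := by exact_mod_cast h3
        linarith
    · rcases hcase with ⟨h1, h2, h3, h4⟩ | ⟨h1, h2, h3, h4⟩
      · have h2' : (t:ℝ) ≤ (T:ℝ) := by exact_mod_cast h2
        have h4' : (x:ℝ) ≤ (t:ℝ) := by exact_mod_cast h4
        linarith
      · have h2' : (t:ℝ) ≤ 2 * (T:ℝ) := by exact_mod_cast h2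
        have h4' : (x:ℝ) ≤ -(t:ℝ) + 2 * (T:ℝ) := by exact_mod_cast h4
        linarith
  have hζ : 0 < Real.sin ((2 * α₀ - (3 * (T:ℝ) + 1) + (3 * (t:ℝ) - (x:ℝ))) / (2 * r)) := by
    apply key
    · rcases hcase with ⟨h1, h2, h3, h4⟩ | ⟨h1, h2, h3, h4⟩
      · have h1' : (1:ℝ) ≤ (t:ℝ) := by exact_mod_cast h1
        have h4' : (x:ℝ) ≤ (t:ℝ) := by exact_mod_cast h4
        linarith
      · have h1' : (T:ℝ) + 1 ≤ (t:ℝ) := by exact_mod_cast h1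
        have h4' : (x:ℝ) ≤ -(t:ℝ) + 2 * (T:ℝ) := by exact_mod_cast h4
        linarith
    · rcases hcase with ⟨h1, h2, h3, h4⟩ | ⟨h1, h2, h3, h4⟩
      · have h2' : (t:ℝ) ≤ (T:ℝ) := by exact_mod_cast h2
        have h3' : (-(t:ℝ) + 2) ≤ (x:ℝ) := by exact_mod_cast h3
        linarith
      · have h2' : (t:ℝ) ≤ 2 * (T:ℝ) := by exact_mod_cast h2
        have h3' : (t:ℝ) - 2 * (T:ℝ) ≤ (x:ℝ) := by exact_mod_cast h3
        linarith
  exact ⟨ne_of_gt hη, div_pos hζ hη⟩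
end

section
/- The limit lim_{T→∞} [−(1/T) · ∑_{n=1}^{T} log cos((2n−T−1)π/(6T))] = log 2 − (3/π) · ∑_{n=1}^∞ (−1)^{n−1} sin(nπ/3)/n² holds, where T ranges over positive integers. -/
open scoped Real
open Filter

open MeasureTheory

noncomputable def w (r x : ℝ) : ℂ := (r : ℂ) * Complex.exp ((2*x : ℝ) * Complex.I)

lemma re_one_add_w (r x : ℝ) : (1 + w r x).re = 1 + r * Real.cos (2*x) := by
  rw [w, Complex.add_re, Complex.one_re, Complex.re_ofReal_mul,
    Complex.exp_ofReal_mul_I_re]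

lemma abs_w (r x : ℝ) (hr : 0 ≤ r) : ‖w r x‖ = r := by
  rw [w, norm_mul, Complex.norm_exp_ofReal_mul_I, Complex.norm_real, Real.norm_eq_abs, mul_one,
    _root_.abs_of_nonneg hr]

lemma cos_two_ge {x : ℝ} (hx : |x| ≤ π/6) : 1/2 ≤ Real.cos (2*x) := by
  have h1 : |2*x| ≤ π/3 := by rw [abs_mul, _root_.abs_two]; linarith [abs_nonneg x, hx]
  have h2 : Real.cos (π/3) ≤ Real.cos |2*x| := by
    apply Real.cos_le_cos_of_nonneg_of_le_pi (abs_nonneg _) _ h1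
    linarith [Real.pi_pos]
  rw [Real.cos_abs, Real.cos_pi_div_three] at h2
  linarith

lemma abs_le_two (r x : ℝ) (hr0 : 0 ≤ r) (hr1 : r ≤ 1) : ‖1 + w r x‖ ≤ 2 := by
  calc ‖1 + w r x‖ ≤ ‖(1:ℂ)‖ + ‖w r x‖ := norm_add_le _ _
  _ ≤ 2 := by rw [abs_w r x hr0]; simp; linarith

lemma one_le_abs (r x : ℝ) (hr0 : 0 ≤ r) (hx : |x| ≤ π/6) : 1 ≤ ‖1 + w r x‖ := by
  have := Complex.re_le_norm (1 + w r x)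
  rw [re_one_add_w] at this
  nlinarith [cos_two_ge hx]

lemma log_abs_bound (r x : ℝ) (hr0 : 0 ≤ r) (hr1 : r ≤ 1) (hx : |x| ≤ π/6) :
    |Real.log (‖1 + w r x‖)| ≤ Real.log 2 := by
  rw [abs_le]
  constructor
  · have h1 := Real.log_nonneg (one_le_abs r x hr0 hx)
    have h2 : (0:ℝ) ≤ Real.log 2 := Real.log_nonneg (by norm_num)
    linarith
  · exact Real.log_le_log (lt_of_lt_of_le one_pos (one_le_abs r x hr0 hx))
      (abs_le_two r x hr0 hr1)

noncomputable def F (r : ℝ) (n : ℕ) (x : ℝ) : ℝ :=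
  (-1 : ℝ)^(n+1) * r^n / n * Real.cos (2*n*x)

lemma term_eq (r x : ℝ) (n : ℕ) :
    ((-1 : ℂ)^(n+1) * (w r x)^n / n) =
      (((-1 : ℝ)^(n+1) * r^n / n : ℝ) : ℂ) * Complex.exp ((2*(n:ℝ)*x : ℝ) * Complex.I) := by
  rcases Nat.eq_zero_or_pos n with rfl | hn
  · simp
  rw [w, mul_pow, ← Complex.exp_nat_mul]
  have harg : (n : ℂ) * (((2*x : ℝ) : ℂ) * Complex.I) = ((2*(n:ℝ)*x : ℝ) : ℂ) * Complex.I := by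
    push_cast; ring
  rw [harg]
  push_cast
  ring

lemma hasSum_F (r x : ℝ) (hr0 : 0 ≤ r) (hr1 : r < 1) :
    HasSum (fun n : ℕ => F r n x) (Real.log (‖1 + w r x‖)) := by
  have hz : ‖w r x‖ < 1 := by rw [abs_w r x hr0]; exact hr1
  have h := Complex.hasSum_taylorSeries_log hz
  have h2 := Complex.reCLM.hasSum h
  simp only [Complex.reCLM_apply] at h2
  rw [Complex.log_re] at h2
  convert h2 using 2 with n
  rw [term_eq, Complex.re_ofReal_mul, Complex.exp_ofReal_mul_I_re, F]

noncomputable def v (r : ℝ) (n : ℕ) : ℝ := (-1 : ℝ)^(n+1) * r^n * Real.sin (n*π/3) / n^2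

lemma integral_F (r : ℝ) (n : ℕ) :
    ∫ x in (-(π/6))..(π/6), F r n x = v r n := by
  rcases Nat.eq_zero_or_pos n with rfl | hn
  · simp [F, v]
  have hc : (2*(n:ℝ)) ≠ 0 := by positivity
  have h1 : ∫ x in (-(π/6))..(π/6), Real.cos (2*(n:ℝ)*x)
      = Real.sin ((n:ℝ)*π/3) / n := by
    have := intervalIntegral.integral_comp_mul_left (a := -(π/6)) (b := π/6)
      (fun y => Real.cos y) hc
    rw [this, integral_cos]
    have e1 : 2*(n:ℝ) * (π/6) = (n:ℝ)*π/3 := by ring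
    have e2 : 2*(n:ℝ) * (-(π/6)) = -((n:ℝ)*π/3) := by ring
    rw [e1, e2, Real.sin_neg]
    rw [smul_eq_mul]
    field_simp
    ring
  calc ∫ x in (-(π/6))..(π/6), F r n x
      = ∫ x in (-(π/6))..(π/6), ((-1 : ℝ)^(n+1) * r^n / n) * Real.cos (2*(n:ℝ)*x) := by
        simp only [F]
    _ = ((-1 : ℝ)^(n+1) * r^n / n) * ∫ x in (-(π/6))..(π/6), Real.cos (2*(n:ℝ)*x) :=
        intervalIntegral.integral_const_mul _ _
    _ = v r n := by
        rw [h1, v]; ring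

lemma mem_uIoc_abs {x : ℝ} (hx : x ∈ Set.uIoc (-(π/6)) (π/6)) : |x| ≤ π/6 := by
  have hle : -(π/6) ≤ π/6 := by linarith [Real.pi_pos]
  rw [Set.uIoc_of_le hle] at hx
  rw [abs_le]
  exact ⟨le_of_lt hx.1, hx.2⟩

lemma hasSum_integral (r : ℝ) (hr0 : 0 ≤ r) (hr1 : r < 1) :
    HasSum (fun n => v r n)
      (∫ x in (-(π/6))..(π/6), Real.log (‖1 + w r x‖)) := by
  have key : HasSum (fun n => ∫ x in (-(π/6))..(π/6), F r n x)
      (∫ x in (-(π/6))..(π/6), Real.log (‖1 + w r x‖)) := by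
    apply intervalIntegral.hasSum_integral_of_dominated_convergence
      (bound := fun n _ => r^n)
    · intro n
      apply Continuous.aestronglyMeasurable
      exact (continuous_const.mul ((Real.continuous_cos.comp
        (continuous_const.mul continuous_id))))
    · intro n
      filter_upwards with t _
      rw [F, Real.norm_eq_abs, abs_mul]
      have h1 : |(-1 : ℝ)^(n+1) * r^n / (n:ℝ)| ≤ r^n := by
        rw [abs_div, abs_mul, abs_pow, abs_neg, abs_one, one_pow, one_mul,
          abs_pow, _root_.abs_of_nonneg hr0]
        rcases Nat.eq_zero_or_pos n with rfl | hn
        · simp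
        · rw [Nat.abs_cast]
          rw [div_le_iff₀ (by exact_mod_cast hn)]
          nlinarith [pow_nonneg hr0 n, (Nat.one_le_cast (α := ℝ)).2 hn]
      calc |(-1 : ℝ)^(n+1) * r^n / (n:ℝ)| * |Real.cos (2*n*t)|
          ≤ r^n * 1 := by
            apply mul_le_mul h1 (Real.abs_cos_le_one _) (abs_nonneg _) (pow_nonneg hr0 n)
        _ = r^n := mul_one _
    · filter_upwards with t _
      exact summable_geometric_of_lt_one hr0 hr1
    · exact intervalIntegrable_const
    · filter_upwards with t _
      exact hasSum_F r t hr0 hr1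
  rwa [show (fun n => ∫ x in (-(π/6))..(π/6), F r n x) = fun n => v r n from
    funext fun n => integral_F r n] at key

noncomputable def u (r : ℝ) (k : ℕ) : ℝ :=
  (-1 : ℝ)^k * r^(k+1) * Real.sin (((k:ℝ)+1)*π/3) / ((k:ℝ)+1)^2

lemma v_succ_eq_u (r : ℝ) (n : ℕ) : v r (n+1) = u r n := by
  rw [v, u]
  push_cast
  rw [pow_succ, pow_succ]
  ring

lemma hasSum_u (r : ℝ) (hr0 : 0 ≤ r) (hr1 : r < 1) :
    HasSum (fun k => u r k)
      (∫ x in (-(π/6))..(π/6), Real.log (‖1 + w r x‖)) := by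
  have h := (hasSum_nat_add_iff' (f := v r) 1).mpr (hasSum_integral r hr0 hr1)
  simp only [Finset.range_one, Finset.sum_singleton] at h
  have hv0 : v r 0 = 0 := by simp [v]
  rw [hv0, sub_zero] at h
  rwa [show (fun n => v r (n+1)) = fun n => u r n from funext fun n => v_succ_eq_u r n] at h

lemma cos_nonneg_of_abs_le {x : ℝ} (hx : |x| ≤ π/6) : 0 ≤ Real.cos x := by
  have hpi := Real.pi_pos
  rw [abs_le] at hx
  apply Real.cos_nonneg_of_mem_Icc
  constructor <;> [linarith [hx.1]; linarith [hx.2]]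

lemma abs_one_add_w_one {x : ℝ} (hx : |x| ≤ π/6) :
    ‖1 + w 1 x‖ = 2 * Real.cos x := by
  have him : (1 + w 1 x).im = Real.sin (2*x) := by
    rw [w, Complex.add_im, Complex.one_im, Complex.im_ofReal_mul,
      Complex.exp_ofReal_mul_I_im]
    simp
  have hre : (1 + w 1 x).re = 1 + Real.cos (2*x) := by
    have := re_one_add_w 1 x; simpa using this
  rw [Complex.norm_def, Complex.normSq_apply, him, hre]
  have hkey : (1 + Real.cos (2*x)) * (1 + Real.cos (2*x)) + Real.sin (2*x) * Real.sin (2*x)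
      = (2 * Real.cos x)^2 := by
    nlinarith [Real.sin_sq_add_cos_sq (2*x), Real.cos_sq x]
  rw [hkey]
  exact Real.sqrt_sq (by linarith [cos_nonneg_of_abs_le hx])

noncomputable def rr (j : ℕ) : ℝ := 1 - 1/((j:ℝ)+1)

lemma rr_nonneg (j : ℕ) : 0 ≤ rr j := by
  rw [rr]
  have h1 : 1/((j:ℝ)+1) ≤ 1 := by
    rw [div_le_one (by positivity)]
    linarith [Nat.cast_nonneg (α := ℝ) j]
  linarith

lemma rr_lt_one (j : ℕ) : rr j < 1 := by
  rw [rr]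
  have : 0 < 1/((j:ℝ)+1) := by positivity
  linarith

lemma tendsto_rr : Filter.Tendsto rr atTop (nhds 1) := by
  have h := (tendsto_one_div_add_atTop_nhds_zero_nat (𝕜 := ℝ)).const_sub 1
  rw [sub_zero] at h
  exact h.congr (fun j => by rw [rr])

lemma cont_abs_w (r : ℝ) : Continuous (fun x : ℝ => ‖1 + w r x‖) := by
  apply continuous_norm.comp
  apply continuous_const.add
  apply continuous_const.mul
  apply Complex.continuous_exp.comp
  exact (Complex.continuous_ofReal.comp (continuous_const.mul continuous_id)).mul
    continuous_const

lemma tendsto_integral_rr :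
    Filter.Tendsto (fun j => ∫ x in (-(π/6))..(π/6),
        Real.log (‖1 + w (rr j) x‖)) atTop
      (nhds (∫ x in (-(π/6))..(π/6), Real.log (‖1 + w 1 x‖))) := by
  apply intervalIntegral.tendsto_integral_filter_of_dominated_convergence
    (bound := fun _ => Real.log 2)
  · filter_upwards with j
    exact (Real.measurable_log.comp (cont_abs_w (rr j)).measurable).aestronglyMeasurable
  · filter_upwards with j
    filter_upwards with x
    intro hx
    rw [Real.norm_eq_abs]
    exact log_abs_bound _ _ (rr_nonneg j) (rr_lt_one j).le (mem_uIoc_abs hx)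
  · exact intervalIntegrable_const
  · filter_upwards with x
    intro hx
    have hx' := mem_uIoc_abs hx
    have hcont : Continuous (fun s : ℝ => ‖1 + w s x‖) := by
      apply continuous_norm.comp
      apply continuous_const.add
      exact Complex.continuous_ofReal.mul continuous_const
    have hpos : (0:ℝ) < ‖1 + w 1 x‖ :=
      lt_of_lt_of_le one_pos (one_le_abs 1 x zero_le_one hx')
    exact ((Real.continuousAt_log hpos.ne').tendsto.comp (hcont.tendsto 1)).comp tendsto_rr

lemma summable_bound : Summable (fun k : ℕ => 1/((k:ℝ)+1)^2) := by
  have h : Summable (fun n : ℕ => 1/(n:ℝ)^2) :=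
    (Real.summable_one_div_nat_pow (p := 2)).2 (by norm_num)
  have h2 := (summable_nat_add_iff (f := fun n : ℕ => 1/(n:ℝ)^2) 1).2 h
  apply h2.congr
  intro n
  push_cast
  ring

lemma tendsto_tsum_rr :
    Filter.Tendsto (fun j => ∑' k, u (rr j) k) atTop (nhds (∑' k, u 1 k)) := by
  apply tendsto_tsum_of_dominated_convergence (bound := fun k : ℕ => 1/((k:ℝ)+1)^2)
    summable_bound
  · intro k
    have hc : Continuous (fun s : ℝ => u s k) := by
      unfold u; fun_prop
    exact (hc.continuousAt (x := 1)).tendsto.comp tendsto_rr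
  · filter_upwards with j
    intro k
    rw [u, Real.norm_eq_abs, abs_div, abs_mul, abs_mul, abs_pow, abs_pow, abs_neg,
      abs_one, one_pow, one_mul, _root_.abs_of_nonneg (rr_nonneg j), abs_pow,
      _root_.abs_of_nonneg (by positivity : (0:ℝ) ≤ (k:ℝ)+1)]
    rw [div_le_div_iff₀ (by positivity) (by positivity)]
    have h1 : rr j ^ (k+1) ≤ 1 := pow_le_one₀ (rr_nonneg j) (rr_lt_one j).le
    have h2 : |Real.sin (((k:ℝ)+1)*π/3)| ≤ 1 := Real.abs_sin_le_one _
    have h3 : rr j ^ (k+1) * |Real.sin (((k:ℝ)+1)*π/3)| ≤ 1 :=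
      mul_le_one₀ h1 (abs_nonneg _) h2
    nlinarith [pow_pos (by positivity : (0:ℝ) < (k:ℝ)+1) 2]

lemma abs_le_of_mem_uIcc {x : ℝ} (hx : x ∈ Set.uIcc (-(π/6)) (π/6)) : |x| ≤ π/6 := by
  have hle : -(π/6) ≤ π/6 := by linarith [Real.pi_pos]
  rw [Set.uIcc_of_le hle] at hx
  rw [abs_le]; exact ⟨hx.1, hx.2⟩

lemma cos_pos_of_abs_le {x : ℝ} (hx : |x| ≤ π/6) : 0 < Real.cos x := by
  have hpi := Real.pi_pos
  rw [abs_le] at hx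
  apply Real.cos_pos_of_mem_Ioo
  constructor <;> [linarith [hx.1]; linarith [hx.2]]

lemma integrable_logcos : IntervalIntegrable (fun x => Real.log (Real.cos x))
    MeasureTheory.volume (-(π/6)) (π/6) := by
  apply ContinuousOn.intervalIntegrable
  intro x hx
  have hpos := cos_pos_of_abs_le (abs_le_of_mem_uIcc hx)
  exact ((Real.continuousAt_log hpos.ne').comp
    Real.continuous_cos.continuousAt).continuousWithinAt

lemma tsum_u_one_eq :
    ∑' k, u 1 k = ∫ x in (-(π/6))..(π/6), Real.log (‖1 + w 1 x‖) := by
  have heq : (fun j => ∑' k, u (rr j) k)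
      = (fun j => ∫ x in (-(π/6))..(π/6), Real.log (‖1 + w (rr j) x‖)) :=
    funext fun j => (hasSum_u (rr j) (rr_nonneg j) (rr_lt_one j)).tsum_eq
  have h1 := tendsto_tsum_rr
  rw [heq] at h1
  exact tendsto_nhds_unique h1 tendsto_integral_rr

lemma integral_log_abs_one :
    ∫ x in (-(π/6))..(π/6), Real.log (‖1 + w 1 x‖)
      = π/3 * Real.log 2 + ∫ x in (-(π/6))..(π/6), Real.log (Real.cos x) := by
  have h1 : ∫ x in (-(π/6))..(π/6), Real.log (‖1 + w 1 x‖)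
      = ∫ x in (-(π/6))..(π/6), (Real.log 2 + Real.log (Real.cos x)) := by
    apply intervalIntegral.integral_congr
    intro x hx
    have hx' := abs_le_of_mem_uIcc hx
    show Real.log (‖1 + w 1 x‖) = Real.log 2 + Real.log (Real.cos x)
    rw [abs_one_add_w_one hx', Real.log_mul two_ne_zero (cos_pos_of_abs_le hx').ne']
  rw [h1, intervalIntegral.integral_add intervalIntegrable_const integrable_logcos,
    intervalIntegral.integral_const, smul_eq_mul]
  ring_nf

lemma partB : ∫ x in (-(π/6))..(π/6), Real.log (Real.cos x)
    = (∑' k, u 1 k) - π/3 * Real.log 2 := by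
  rw [tsum_u_one_eq, integral_log_abs_one]; ring

noncomputable def f0 (x : ℝ) : ℝ := Real.log (Real.cos x)

noncomputable def Pt (T i : ℕ) : ℝ := -(π/6) + i * (π/(3*(T:ℝ)))

lemma Pt_step (T i : ℕ) : Pt T (i+1) - Pt T i = π/(3*(T:ℝ)) := by
  rw [Pt, Pt]; push_cast; ring

lemma Pt_zero (T : ℕ) : Pt T 0 = -(π/6) := by simp [Pt]

lemma Pt_last {T : ℕ} (hT : 1 ≤ T) : Pt T T = π/6 := by
  have hTpos : (0:ℝ) < T := by exact_mod_cast hT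
  rw [Pt]; field_simp; ring

lemma Pt_mem {T i : ℕ} (hT : 1 ≤ T) (hi : i ≤ T) :
    Pt T i ∈ Set.Icc (-(π/6)) (π/6) := by
  have hpi := Real.pi_pos
  have hTpos : (0:ℝ) < T := by exact_mod_cast hT
  have hi' : (i:ℝ) ≤ T := by exact_mod_cast hi
  have hpos : (0:ℝ) ≤ π/(3*(T:ℝ)) := by positivity
  constructor
  · rw [Pt]; nlinarith [Nat.cast_nonneg (α := ℝ) i]
  · rw [Pt]
    have h2 : (i:ℝ) * (π/(3*T)) ≤ (T:ℝ) * (π/(3*T)) :=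
      mul_le_mul_of_nonneg_right hi' hpos
    have h3 : (T:ℝ) * (π/(3*T)) = π/3 := by field_simp
    nlinarith

lemma continuousOn_f0 : ContinuousOn f0 (Set.Icc (-(π/6)) (π/6)) := by
  intro x hx
  have hx' : |x| ≤ π/6 := abs_le.2 ⟨hx.1, hx.2⟩
  exact ((Real.continuousAt_log (cos_pos_of_abs_le hx').ne').comp
    Real.continuous_cos.continuousAt).continuousWithinAt

lemma partA : Filter.Tendsto (fun T : ℕ => (1/(T:ℝ)) *
      ∑ n ∈ Finset.Icc 1 T, Real.log (Real.cos ((2*(n:ℝ) - T - 1)*π/(6*T))))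
    atTop (nhds ((3/π) * ∫ x in (-(π/6))..(π/6), f0 x)) := by
  have hpi := Real.pi_pos
  rw [Metric.tendsto_atTop]
  intro ε hε
  have hUC := isCompact_Icc.uniformContinuousOn_of_continuous continuousOn_f0
  rw [Metric.uniformContinuousOn_iff] at hUC
  obtain ⟨δ, hδ, hδ'⟩ := hUC (ε/2) (by linarith)
  obtain ⟨N0, hN0⟩ := exists_nat_gt (π/(3*δ))
  refine ⟨max N0 1, fun T hT => ?_⟩
  have hT1 : 1 ≤ T := le_trans (le_max_right N0 1) hT
  have hTpos : (0:ℝ) < T := by exact_mod_cast hT1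
  have hTN0 : (N0:ℝ) ≤ T := by exact_mod_cast le_trans (le_max_left N0 1) hT
  have hhpos : 0 < π/(3*(T:ℝ)) := by positivity
  have hhδ : π/(3*(T:ℝ)) < δ := by
    rw [div_lt_iff₀ (by positivity)]
    have h1 : π/(3*δ) < (T:ℝ) := lt_of_lt_of_le hN0 hTN0
    rw [div_lt_iff₀ (by positivity)] at h1
    nlinarith
  -- subinterval facts
  have hle : ∀ i : ℕ, Pt T i ≤ Pt T (i+1) := by
    intro i; nlinarith [Pt_step T i]
  have hsub : ∀ k, k < T → Set.uIcc (Pt T k) (Pt T (k+1)) ⊆ Set.Icc (-(π/6)) (π/6) := by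
    intro k hk
    rw [Set.uIcc_of_le (hle k)]
    intro y hy
    exact ⟨le_trans (Pt_mem hT1 hk.le).1 hy.1, le_trans hy.2 (Pt_mem hT1 hk).2⟩
  have hint : ∀ k < T, IntervalIntegrable f0 MeasureTheory.volume (Pt T k) (Pt T (k+1)) :=
    fun k hk => (continuousOn_f0.mono (hsub k hk)).intervalIntegrable
  have hsplit := intervalIntegral.sum_integral_adjacent_intervals hint
  rw [Pt_zero, Pt_last hT1] at hsplit
  -- rewrite the sum over Icc as a sum over range with midpoint tags
  have hsum : ∑ n ∈ Finset.Icc 1 T, Real.log (Real.cos ((2*(n:ℝ) - T - 1)*π/(6*T)))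
      = ∑ i ∈ Finset.range T, f0 (Pt T i + π/(3*(T:ℝ))/2) := by
    rw [← Finset.Ico_add_one_right_eq_Icc, Finset.sum_Ico_eq_sum_range]
    try simp only [Nat.add_sub_cancel]
    apply Finset.sum_congr rfl
    intro i _
    rw [f0, Pt]
    have hT0 : (T:ℝ) ≠ 0 := hTpos.ne'
    congr 2
    push_cast
    field_simp
    ring
  -- key estimate on each subinterval
  have hest : ∀ i ∈ Finset.range T,
      |π/(3*(T:ℝ)) * f0 (Pt T i + π/(3*(T:ℝ))/2) - ∫ x in (Pt T i)..(Pt T (i+1)), f0 x|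
        ≤ (ε/2) * (π/(3*(T:ℝ))) := by
    intro i hi
    rw [Finset.mem_range] at hi
    have hconst : ∫ _x in (Pt T i)..(Pt T (i+1)), f0 (Pt T i + π/(3*(T:ℝ))/2)
        = π/(3*(T:ℝ)) * f0 (Pt T i + π/(3*(T:ℝ))/2) := by
      rw [intervalIntegral.integral_const, smul_eq_mul, Pt_step]
    rw [← hconst, ← intervalIntegral.integral_sub intervalIntegrable_const (hint i hi)]
    have hbound : ∀ x ∈ Set.uIoc (Pt T i) (Pt T (i+1)),
        ‖f0 (Pt T i + π/(3*(T:ℝ))/2) - f0 x‖ ≤ ε/2 := by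
      intro x hx
      have hxIcc : x ∈ Set.Icc (-(π/6)) (π/6) := hsub i hi (Set.uIoc_subset_uIcc hx)
      have htIcc : Pt T i + π/(3*(T:ℝ))/2 ∈ Set.Icc (-(π/6)) (π/6) := by
        apply hsub i hi
        rw [Set.uIcc_of_le (hle i)]
        exact ⟨by nlinarith, by nlinarith [Pt_step T i]⟩
      have hdist : dist (Pt T i + π/(3*(T:ℝ))/2) x < δ := by
        rw [Real.dist_eq]
        rw [Set.uIoc_of_le (hle i)] at hx
        rw [abs_lt]
        exact ⟨by nlinarith [hx.2, Pt_step T i], by nlinarith [hx.1, Pt_step T i]⟩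
      exact (hδ' _ htIcc x hxIcc hdist).le
    calc |∫ x in (Pt T i)..(Pt T (i+1)), (f0 (Pt T i + π/(3*(T:ℝ))/2) - f0 x)|
        ≤ (ε/2) * |Pt T (i+1) - Pt T i| :=
          intervalIntegral.norm_integral_le_of_norm_le_const hbound
      _ = (ε/2) * (π/(3*(T:ℝ))) := by rw [Pt_step, _root_.abs_of_pos hhpos]
  -- sum up
  have hD : |π/(3*(T:ℝ)) * (∑ i ∈ Finset.range T, f0 (Pt T i + π/(3*(T:ℝ))/2))
      - ∫ x in (-(π/6))..(π/6), f0 x| ≤ (ε/2) * (π/3) := by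
    have e1 : π/(3*(T:ℝ)) * (∑ i ∈ Finset.range T, f0 (Pt T i + π/(3*(T:ℝ))/2))
        - ∫ x in (-(π/6))..(π/6), f0 x
        = ∑ i ∈ Finset.range T, (π/(3*(T:ℝ)) * f0 (Pt T i + π/(3*(T:ℝ))/2)
            - ∫ x in (Pt T i)..(Pt T (i+1)), f0 x) := by
      rw [Finset.sum_sub_distrib, hsplit, Finset.mul_sum]
    rw [e1]
    calc |∑ i ∈ Finset.range T, (π/(3*(T:ℝ)) * f0 (Pt T i + π/(3*(T:ℝ))/2)
            - ∫ x in (Pt T i)..(Pt T (i+1)), f0 x)|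
        ≤ ∑ i ∈ Finset.range T, |π/(3*(T:ℝ)) * f0 (Pt T i + π/(3*(T:ℝ))/2)
            - ∫ x in (Pt T i)..(Pt T (i+1)), f0 x| := Finset.abs_sum_le_sum_abs _ _
      _ ≤ ∑ _i ∈ Finset.range T, (ε/2) * (π/(3*(T:ℝ))) := Finset.sum_le_sum hest
      _ = T * ((ε/2) * (π/(3*(T:ℝ)))) := by rw [Finset.sum_const, Finset.card_range]; ring
      _ = (ε/2) * (π/3) := by field_simp
  -- conclude
  rw [Real.dist_eq, hsum]
  have e2 : (1/(T:ℝ)) * (∑ i ∈ Finset.range T, f0 (Pt T i + π/(3*(T:ℝ))/2))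
      - (3/π) * ∫ x in (-(π/6))..(π/6), f0 x
      = (3/π) * (π/(3*(T:ℝ)) * (∑ i ∈ Finset.range T, f0 (Pt T i + π/(3*(T:ℝ))/2))
          - ∫ x in (-(π/6))..(π/6), f0 x) := by
    rw [mul_sub, ← mul_assoc]
    congr 2
    field_simp
  rw [e2, abs_mul, _root_.abs_of_pos (by positivity : (0:ℝ) < 3/π)]
  calc (3/π) * |π/(3*(T:ℝ)) * (∑ i ∈ Finset.range T, f0 (Pt T i + π/(3*(T:ℝ))/2))
          - ∫ x in (-(π/6))..(π/6), f0 x|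
      ≤ (3/π) * ((ε/2) * (π/3)) := mul_le_mul_of_nonneg_left hD (by positivity)
    _ = ε/2 := by field_simp
    _ < ε := by linarith

/-- Asymptotic evaluation of `B^{(3)}_{2T} = ∏_{n=1}^{T} cos((2n−T−1)π/(6T))`:
`lim_{T→∞} [−(1/T)·∑_{n=1}^{T} log cos((2n−T−1)π/(6T))]
  = log 2 − (3/π) ∑_{n≥1} (−1)^{n−1} sin(nπ/3)/n²`. -/
theorem log_cos_product_asymptotics :
    Tendsto (fun T : ℕ => -(1 / (T : ℝ)) *
        ∑ n ∈ Finset.Icc 1 T, Real.log (Real.cos ((2 * (n : ℝ) - (T : ℝ) - 1) * π / (6 * T))))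
      atTop
      (nhds (Real.log 2 -
        3 / π * ∑' n : ℕ, (-1 : ℝ) ^ n * Real.sin (((n : ℝ) + 1) * π / 3) / ((n : ℝ) + 1) ^ 2)) := by
  have h := partA.neg
  have hval : -((3/π) * ∫ x in (-(π/6))..(π/6), f0 x)
      = Real.log 2 -
        3 / π * ∑' n : ℕ, (-1 : ℝ) ^ n * Real.sin (((n : ℝ) + 1) * π / 3) / ((n : ℝ) + 1) ^ 2 := by
    have h1 : (∫ x in (-(π/6))..(π/6), f0 x)
        = ∫ x in (-(π/6))..(π/6), Real.log (Real.cos x) := rfl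
    rw [h1, partB]
    have h2 : ∑' k, u 1 k
        = ∑' n : ℕ, (-1 : ℝ) ^ n * Real.sin (((n : ℝ) + 1) * π / 3) / ((n : ℝ) + 1) ^ 2 :=
      tsum_congr fun k => by rw [u, one_pow, mul_one]
    rw [h2]
    have hπ : (π : ℝ) ≠ 0 := Real.pi_ne_zero
    field_simp
    ring
  rw [hval] at h
  exact h.congr (fun T => (neg_mul _ _).symm)
end
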